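/- Let F(u) = ∫₀^{u} exp(t²) dt, f(u) = 1 − 2·u·exp(−u²)·F(u), let u₀ be the unique zero of f in (0, ∞), fix q > 0, define h(y) = ∫₀^{y} f(q·η) dη, ĉ₁,crit = (1/q)·∫₀^{u₀} f(u) du, and for 0 < ĉ₁ < ĉ₁,crit let ȳ(ĉ₁) be the unique y ∈ (0, u₀/q) with h(y) = ĉ₁, and define Ā(ĉ₁) = ∫₀^{ȳ(ĉ₁)} y·h(y)/√(ĉ₁² − h(y)²) dy. Then the map ĉ₁ ↦ ĉ₁/Ā(ĉ₁) is strictly decreasing on (0, ĉ₁,crit); i.e. if 0 < ĉ₁ⁱ < ĉ₁ʲ < ĉ₁,crit then ĉ₁ⁱ/Ā(ĉ₁ⁱ) > ĉ₁ʲ/Ā(ĉ₁ʲ). -/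

import Mathlib

open Real MeasureTheory intervalIntegral Set

/-- `F(u) = ∫₀^u exp(t²) dt`. -/
noncomputable def Ferf (u : ℝ) : ℝ := ∫ t in (0:ℝ)..u, Real.exp (t ^ 2)

/-- `f(u) = 1 - 2 u exp(-u²) F(u)`, the rescaled curvature function. -/
noncomputable def fker (u : ℝ) : ℝ := 1 - 2 * u * Real.exp (-(u ^ 2)) * Ferf u

lemma cont_exp_sq : Continuous fun t : ℝ => Real.exp (t ^ 2) := by
  exact Real.continuous_exp.comp (continuous_pow 2)

lemma Ferf_hasDerivAt (u : ℝ) : HasDerivAt Ferf (Real.exp (u ^ 2)) u := by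
  apply intervalIntegral.integral_hasDerivAt_right
    (cont_exp_sq.intervalIntegrable _ _)
    (cont_exp_sq.stronglyMeasurableAtFilter _ _)
    cont_exp_sq.continuousAt

lemma Ferf_zero : Ferf 0 = 0 := intervalIntegral.integral_same

lemma Ferf_nonneg {u : ℝ} (hu : 0 ≤ u) : 0 ≤ Ferf u := by
  apply intervalIntegral.integral_nonneg hu
  intro t _; positivity

lemma fker_zero : fker 0 = 1 := by simp [fker, Ferf_zero]

lemma fker_cont : Continuous fker := by
  have : Continuous Ferf := by
    exact (Differentiable.continuous fun u => (Ferf_hasDerivAt u).differentiableAt)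
  unfold fker
  fun_prop

lemma fker_hasDerivAt (u : ℝ) :
    HasDerivAt fker (2 * Real.exp (-(u^2)) * Ferf u * (2*u^2 - 1) - 2*u) u := by
  have h1 : HasDerivAt (fun u : ℝ => 2 * u) 2 u := by
    simpa using (hasDerivAt_id u).const_mul 2
  have h2 : HasDerivAt (fun u : ℝ => Real.exp (-(u^2))) (Real.exp (-(u^2)) * (-(2*u))) u := by
    have hp : HasDerivAt (fun u : ℝ => -(u^2)) (-(2*u)) u := by
      simpa using ((hasDerivAt_pow 2 u)).fun_neg
    simpa [mul_comm] using hp.exp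
  have h3 := Ferf_hasDerivAt u
  have hprod : HasDerivAt (fun u : ℝ => 2 * u * Real.exp (-(u^2)) * Ferf u)
      ((2 * Real.exp (-(u^2)) + 2 * u * (Real.exp (-(u^2)) * (-(2*u)))) * Ferf u
        + 2 * u * Real.exp (-(u^2)) * Real.exp (u^2)) u := by
    exact ((h1.mul h2).mul h3)
  have := (hasDerivAt_const u (1:ℝ)).sub hprod
  refine HasDerivAt.congr_deriv this ?_
  have : Real.exp (-(u^2)) * Real.exp (u^2) = 1 := by
    rw [← Real.exp_add]; simp
  linear_combination (-(2*u)) * this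

lemma fker_pos_of_lt_u₀ {u₀ : ℝ} (hu₀ : 0 < u₀)
    (huniq : ∀ u : ℝ, 0 < u → fker u = 0 → u = u₀)
    {u : ℝ} (hu : 0 ≤ u) (hu' : u < u₀) : 0 < fker u := by
  by_contra hle
  push_neg at hle
  rcases eq_or_lt_of_le hle with heq | hlt
  · rcases eq_or_lt_of_le hu with h0 | h0
    · rw [← h0, fker_zero] at heq; norm_num at heq
    · have := huniq u h0 heq
      linarith
  · -- fker u < 0, fker 0 = 1 > 0, IVT gives a zero in (0,u)
    have hcont : ContinuousOn fker (Icc 0 u) := fker_cont.continuousOn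
    have h0u : (0:ℝ) ≤ u := hu
    have : (0:ℝ) ∈ Ioo (fker u) (fker 0) := by
      rw [fker_zero]; exact ⟨hlt, one_pos⟩
    have hsub := intermediate_value_Ioo' h0u hcont
    obtain ⟨z, hz, hfz⟩ := hsub this
    have := huniq z hz.1 hfz
    linarith [hz.2]

lemma fker_pos_of_lt_u₀' {u₀ : ℝ} (hu₀ : 0 < u₀)
    (huniq : ∀ u : ℝ, 0 < u → fker u = 0 → u = u₀)
    {u : ℝ} (hu : 0 < u) (hu' : u < u₀) : 0 < fker u :=
  fker_pos_of_lt_u₀ hu₀ huniq hu.le hu'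

lemma fker_strictAntiOn {u₀ : ℝ} (hu₀ : 0 < u₀)
    (huniq : ∀ u : ℝ, 0 < u → fker u = 0 → u = u₀) :
    StrictAntiOn fker (Icc 0 u₀) := by
  apply strictAntiOn_of_deriv_neg (convex_Icc 0 u₀) fker_cont.continuousOn
  intro x hx
  rw [interior_Icc] at hx
  rw [(fker_hasDerivAt x).deriv]
  have hfpos := fker_pos_of_lt_u₀ hu₀ huniq hx.1.le hx.2
  have hFnn : 0 ≤ Ferf x := Ferf_nonneg hx.1.le
  have hexp : 0 < Real.exp (-(x^2)) := Real.exp_pos _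
  have hx0 : 0 < x := hx.1
  -- fker x > 0 means 2 x e F < 1
  have key : 2 * x * Real.exp (-(x^2)) * Ferf x < 1 := by
    have : fker x = 1 - 2 * x * Real.exp (-(x^2)) * Ferf x := rfl
    linarith [hfpos]
  have hEF : 0 ≤ Real.exp (-(x^2)) * Ferf x := mul_nonneg hexp.le hFnn
  nlinarith [mul_pos hx0 hx0, sq_nonneg x]

section H
variable {u₀ q : ℝ} {h : ℝ → ℝ}

lemma h_hasDerivAt (hh : ∀ y : ℝ, h y = ∫ η in (0:ℝ)..y, fker (q * η)) (y : ℝ) :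
    HasDerivAt h (fker (q * y)) y := by
  have hfun : h = fun y => ∫ η in (0:ℝ)..y, fker (q * η) := funext hh
  rw [hfun]
  have hc : Continuous fun η : ℝ => fker (q * η) :=
    fker_cont.comp (continuous_const.mul continuous_id)
  exact intervalIntegral.integral_hasDerivAt_right
    (hc.intervalIntegrable _ _) (hc.stronglyMeasurableAtFilter _ _) hc.continuousAt

lemma h_zero (hh : ∀ y : ℝ, h y = ∫ η in (0:ℝ)..y, fker (q * η)) : h 0 = 0 := by
  rw [hh]; exact intervalIntegral.integral_same

lemma h_cont (hh : ∀ y : ℝ, h y = ∫ η in (0:ℝ)..y, fker (q * η)) : Continuous h :=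
  Differentiable.continuous fun y => (h_hasDerivAt hh y).differentiableAt

lemma h_strictMonoOn (hu₀ : 0 < u₀)
    (huniq : ∀ u : ℝ, 0 < u → fker u = 0 → u = u₀) (hq : 0 < q)
    (hh : ∀ y : ℝ, h y = ∫ η in (0:ℝ)..y, fker (q * η)) :
    StrictMonoOn h (Icc 0 (u₀ / q)) := by
  apply strictMonoOn_of_deriv_pos (convex_Icc _ _) (h_cont hh).continuousOn
  intro x hx
  rw [interior_Icc] at hx
  rw [(h_hasDerivAt hh x).deriv]
  apply fker_pos_of_lt_u₀ hu₀ huniq (by nlinarith [hx.1])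
  have := hx.2
  calc q * x < q * (u₀ / q) := by exact (mul_lt_mul_iff_right₀ hq).mpr this
  _ = u₀ := by field_simp

end H

lemma key_repr {u₀ q ccrit : ℝ} {h ybar Abar : ℝ → ℝ} (hu₀ : 0 < u₀)
    (huniq : ∀ u : ℝ, 0 < u → fker u = 0 → u = u₀) (hq : 0 < q)
    (hh : ∀ y : ℝ, h y = ∫ η in (0:ℝ)..y, fker (q * η))
    (hybar : ∀ c1 ∈ Set.Ioo (0:ℝ) ccrit,
      ybar c1 ∈ Set.Ioo 0 (u₀ / q) ∧ h (ybar c1) = c1)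
    (hAbar : ∀ c1 ∈ Set.Ioo (0:ℝ) ccrit,
      Abar c1 = ∫ y in (0:ℝ)..(ybar c1), y * h y / Real.sqrt (c1 ^ 2 - (h y) ^ 2))
    {c : ℝ} (hc : c ∈ Set.Ioo (0:ℝ) ccrit) :
    IntegrableOn (fun s => ybar (c*s) / fker (q * ybar (c*s)) * (s / Real.sqrt (1 - s^2)))
      (Ioo (0:ℝ) 1) volume ∧
    Abar c = c * ∫ s in Ioo (0:ℝ) 1,
      ybar (c*s) / fker (q * ybar (c*s)) * (s / Real.sqrt (1 - s^2)) := by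
  obtain ⟨hyb, hhyb⟩ := hybar c hc
  set Y := ybar c with hYdef
  have hc0 : 0 < c := hc.1
  have hY0 : 0 < Y := hyb.1
  have hYu : Y < u₀ / q := hyb.2
  have hqY : q * Y < u₀ := by
    rw [lt_div_iff₀ hq] at hYu; linarith
  have hmono := h_strictMonoOn hu₀ huniq hq hh
  have hYmem : Y ∈ Icc 0 (u₀/q) := ⟨hY0.le, hYu.le⟩
  have hsub : Icc (0:ℝ) Y ⊆ Icc 0 (u₀/q) := Icc_subset_Icc le_rfl hYu.le
  have h0 : h 0 = 0 := h_zero hh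
  have hmon := hmono.monotoneOn
  have huq0 : (0:ℝ) ≤ u₀ / q := by positivity
  have hpos : ∀ y ∈ Ioo (0:ℝ) Y, 0 < h y := by
    intro y hy
    have := hmono ⟨le_rfl, huq0⟩ (hsub ⟨hy.1.le, hy.2.le⟩) hy.1
    rwa [h0] at this
  have hlt : ∀ y ∈ Ioo (0:ℝ) Y, h y < c := by
    intro y hy
    have := hmono (hsub ⟨hy.1.le, hy.2.le⟩) hYmem hy.2
    rwa [hhyb] at this
  set δ := fker (q * Y) with hδdef
  have hδ : 0 < δ := fker_pos_of_lt_u₀ hu₀ huniq (mul_nonneg hq.le hY0.le) hqY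
  have hfge : ∀ y ∈ Icc (0:ℝ) Y, δ ≤ fker (q*y) := by
    intro y hy
    rcases eq_or_lt_of_le hy.2 with rfl | hlt'
    · exact le_rfl
    · apply le_of_lt
      apply fker_strictAntiOn hu₀ huniq
      · exact ⟨mul_nonneg hq.le hy.1, by nlinarith [hy.1]⟩
      · exact ⟨mul_nonneg hq.le hY0.le, hqY.le⟩
      · exact (mul_lt_mul_iff_right₀ hq).mpr hlt'
  have hfpos : ∀ y ∈ Icc (0:ℝ) Y, 0 < fker (q*y) := fun y hy => lt_of_lt_of_le hδ (hfge y hy)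
  have hgap : ∀ y ∈ Icc (0:ℝ) Y, δ * (Y - y) ≤ c - h y := by
    intro y hy
    rcases eq_or_lt_of_le hy.2 with rfl | hyY
    · rw [hhyb]; simp
    · obtain ⟨t, ht, hslope⟩ := exists_hasDerivAt_eq_slope h (fun x => fker (q*x)) hyY
        (h_cont hh).continuousOn (fun x _ => h_hasDerivAt hh x)
      have h1 : δ ≤ fker (q*t) := hfge t ⟨le_trans hy.1 ht.1.le, ht.2.le⟩
      rw [hslope, hhyb] at h1
      have hYy : 0 < Y - y := by linarith
      exact (le_div_iff₀ hYy).mp h1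
  have hsq : ∀ y ∈ Icc (0:ℝ) Y, c*δ*(Y - y) ≤ c^2 - (h y)^2 := by
    intro y hy
    have h1 := hgap y hy
    have h2 : 0 ≤ h y := by
      have := hmon ⟨le_rfl, huq0⟩ (hsub hy) hy.1
      rwa [h0] at this
    nlinarith [mul_le_mul_of_nonneg_right h1 (by linarith : (0:ℝ) ≤ c + h y),
      mul_nonneg (mul_nonneg hδ.le (sub_nonneg.mpr hy.2)) h2]
  set Φ : ℝ → ℝ := fun y => y * h y / Real.sqrt (c^2 - (h y)^2) with hΦdef
  have hcontΦ : ContinuousOn Φ (Ioo 0 Y) := by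
    apply ContinuousOn.div
    · exact (continuous_id.mul (h_cont hh)).continuousOn
    · exact (Real.continuous_sqrt.comp
        (continuous_const.sub ((h_cont hh).pow 2))).continuousOn
    · intro y hy
      have := hpos y hy; have := hlt y hy
      have : 0 < c^2 - (h y)^2 := by nlinarith
      exact (Real.sqrt_pos.mpr this).ne'
  have hKint : IntegrableOn
      (fun y => (Y*c/Real.sqrt (c*δ)) * (Y - y) ^ (-(1/2) : ℝ)) (Ioo 0 Y) volume := by
    have h1 : IntervalIntegrable (fun x : ℝ => x ^ (-(1/2):ℝ)) volume 0 Y :=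
      intervalIntegrable_rpow' (by norm_num)
    have h2 := h1.comp_sub_left Y
    have h2' : IntervalIntegrable (fun x : ℝ => (Y - x)^(-(1/2):ℝ)) volume 0 Y := by
      simpa using h2.symm
    have h3 := intervalIntegrable_iff.mp h2'
    rw [uIoc_of_le hY0.le] at h3
    exact (h3.mono_set Ioo_subset_Ioc_self).const_mul _
  have hΦint : IntegrableOn Φ (Ioo 0 Y) volume := by
    apply Integrable.mono' hKint (hcontΦ.aestronglyMeasurable measurableSet_Ioo)
    rw [ae_restrict_iff' measurableSet_Ioo]
    filter_upwards with y hy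
    have hy2 := hsq y ⟨hy.1.le, hy.2.le⟩
    have hYy : 0 < Y - y := by linarith [hy.2]
    have hden : Real.sqrt (c*δ) * Real.sqrt (Y - y) ≤ Real.sqrt (c^2 - (h y)^2) := by
      rw [← Real.sqrt_mul (by positivity)]
      exact Real.sqrt_le_sqrt hy2
    have hdenpos : 0 < Real.sqrt (c*δ) * Real.sqrt (Y-y) := by positivity
    have hnum : y * h y ≤ Y * c :=
      mul_le_mul hy.2.le (hlt y hy).le (hpos y hy).le hY0.le
    have hnn : 0 ≤ Φ y := by
      apply div_nonneg (by nlinarith [hpos y hy, hy.1]) (Real.sqrt_nonneg _)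
    rw [Real.norm_of_nonneg hnn]
    have hrpow : (Y - y) ^ (-(1/2) : ℝ) = 1 / Real.sqrt (Y - y) := by
      rw [Real.rpow_neg hYy.le, ← Real.sqrt_eq_rpow, one_div]
    rw [hrpow]
    rw [show Y*c/Real.sqrt (c*δ) * (1/Real.sqrt (Y-y))
        = Y*c/(Real.sqrt (c*δ) * Real.sqrt (Y-y)) by field_simp]
    exact div_le_div₀ (by positivity) hnum hdenpos hden
  set m : ℝ → ℝ := fun y => h y / c with hmdef
  have hder : ∀ y ∈ Ioo (0:ℝ) Y, HasDerivWithinAt m (fker (q*y)/c) (Ioo (0:ℝ) Y) y :=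
    fun y _ => ((h_hasDerivAt hh y).div_const c).hasDerivWithinAt
  have hinjh : InjOn h (Icc 0 (u₀/q)) := hmono.injOn
  have hinj : InjOn m (Ioo (0:ℝ) Y) := by
    intro y1 h1 y2 h2 he
    apply hinjh (hsub ⟨h1.1.le, h1.2.le⟩) (hsub ⟨h2.1.le, h2.2.le⟩)
    have : h y1 / c = h y2 / c := he
    field_simp at this
    exact this
  have hybar_inv : ∀ y ∈ Ioo (0:ℝ) Y, ybar (h y) = y := by
    intro y hy
    have hhy : h y ∈ Set.Ioo (0:ℝ) ccrit := ⟨hpos y hy, lt_trans (hlt y hy) hc.2⟩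
    obtain ⟨hmem, heq⟩ := hybar (h y) hhy
    exact hinjh ⟨hmem.1.le, hmem.2.le⟩ (hsub ⟨hy.1.le, hy.2.le⟩) heq
  have himg : m '' (Ioo (0:ℝ) Y) = Ioo (0:ℝ) 1 := by
    ext s
    constructor
    · rintro ⟨y, hy, rfl⟩
      exact ⟨div_pos (hpos y hy) hc0, (div_lt_one hc0).mpr (hlt y hy)⟩
    · intro hs
      have hcs : c * s ∈ Set.Ioo (0:ℝ) ccrit :=
        ⟨mul_pos hc0 hs.1, lt_trans (by nlinarith [hs.2]) hc.2⟩
      obtain ⟨hmem, heq⟩ := hybar _ hcs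
      refine ⟨ybar (c*s), ⟨hmem.1, ?_⟩, ?_⟩
      · apply (hmono.lt_iff_lt ⟨hmem.1.le, hmem.2.le⟩ hYmem).mp
        rw [heq, hhyb]
        nlinarith [hs.2]
      · show h (ybar (c*s)) / c = s
        rw [heq]
        field_simp
  set g : ℝ → ℝ := fun s => ybar (c*s) / fker (q * ybar (c*s)) * (s / Real.sqrt (1 - s^2))
    with hgdef
  have hcongr : ∀ y ∈ Ioo (0:ℝ) Y, |fker (q*y)/c| • g (m y) = Φ y / c := by
    intro y hy
    have hfq : 0 < fker (q*y) := hfpos y ⟨hy.1.le, hy.2.le⟩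
    have hmul : c * (h y / c) = h y := by field_simp
    have hsqpos : 0 < c^2 - (h y)^2 := by nlinarith [hpos y hy, hlt y hy]
    have hsqrt : Real.sqrt (1 - (h y/c)^2) = Real.sqrt (c^2 - (h y)^2) / c := by
      rw [show 1 - (h y/c)^2 = (c^2 - (h y)^2)/c^2 by field_simp,
        Real.sqrt_div' _ (by positivity), Real.sqrt_sq hc0.le]
    have hsr : Real.sqrt (c^2 - (h y)^2) ≠ 0 := (Real.sqrt_pos.mpr hsqpos).ne'
    show |fker (q*y)/c| * (ybar (c * (h y / c)) / fker (q * ybar (c * (h y / c)))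
      * ((h y / c) / Real.sqrt (1 - (h y / c)^2))) = Φ y / c
    rw [hmul, hybar_inv y hy, hsqrt, abs_of_pos (by positivity)]
    show fker (q*y)/c * (y / fker (q*y) * (h y / c / (Real.sqrt (c^2 - (h y)^2) / c)))
      = y * h y / Real.sqrt (c^2 - (h y)^2) / c
    field_simp
  have hint_eq := integral_image_eq_integral_abs_deriv_smul measurableSet_Ioo hder hinj g
  rw [himg] at hint_eq
  have habs : IntegrableOn (fun y => |fker (q*y)/c| • g (m y)) (Ioo (0:ℝ) Y) volume := by
    apply Integrable.congr (hΦint.div_const c)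
    rw [Filter.eventuallyEq_comm]
    exact (ae_restrict_iff' measurableSet_Ioo).mpr (ae_of_all _ fun y hy => hcongr y hy)
  have hgint := (integrableOn_image_iff_integrableOn_abs_deriv_smul
    measurableSet_Ioo hder hinj g)
  rw [himg] at hgint
  have hright : ∫ y in Ioo (0:ℝ) Y, |fker (q*y)/c| • g (m y) =
      (∫ y in Ioo (0:ℝ) Y, Φ y) / c := by
    rw [setIntegral_congr_fun measurableSet_Ioo hcongr, MeasureTheory.integral_div]
  constructor
  · exact hgint.mpr habs
  · rw [hAbar c hc, intervalIntegral.integral_of_le hY0.le, integral_Ioc_eq_integral_Ioo]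
    rw [hint_eq, hright]
    field_simp
    rfl

lemma G_facts {u₀ q ccrit : ℝ} {h ybar : ℝ → ℝ} (hu₀ : 0 < u₀)
    (huniq : ∀ u : ℝ, 0 < u → fker u = 0 → u = u₀) (hq : 0 < q)
    (hybar : ∀ c1 ∈ Set.Ioo (0:ℝ) ccrit,
      ybar c1 ∈ Set.Ioo 0 (u₀ / q) ∧ h (ybar c1) = c1)
    {u : ℝ} (hu : u ∈ Set.Ioo (0:ℝ) ccrit) :
    0 < ybar u ∧ 0 < fker (q * ybar u) := by
  obtain ⟨hmem, _⟩ := hybar u hu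
  refine ⟨hmem.1, ?_⟩
  apply fker_pos_of_lt_u₀ hu₀ huniq (mul_nonneg hq.le hmem.1.le)
  have := hmem.2
  rw [lt_div_iff₀ hq] at this
  linarith

lemma G_mono {u₀ q ccrit : ℝ} {h ybar : ℝ → ℝ} (hu₀ : 0 < u₀)
    (huniq : ∀ u : ℝ, 0 < u → fker u = 0 → u = u₀) (hq : 0 < q)
    (hh : ∀ y : ℝ, h y = ∫ η in (0:ℝ)..y, fker (q * η))
    (hybar : ∀ c1 ∈ Set.Ioo (0:ℝ) ccrit,
      ybar c1 ∈ Set.Ioo 0 (u₀ / q) ∧ h (ybar c1) = c1)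
    {u1 u2 : ℝ} (h1 : u1 ∈ Set.Ioo (0:ℝ) ccrit) (h2 : u2 ∈ Set.Ioo (0:ℝ) ccrit)
    (h12 : u1 < u2) :
    ybar u1 / fker (q * ybar u1) < ybar u2 / fker (q * ybar u2) := by
  obtain ⟨hm1, he1⟩ := hybar u1 h1
  obtain ⟨hm2, he2⟩ := hybar u2 h2
  obtain ⟨hy1, hf1⟩ := G_facts hu₀ huniq hq hybar h1
  obtain ⟨hy2, hf2⟩ := G_facts hu₀ huniq hq hybar h2
  have hmono := h_strictMonoOn hu₀ huniq hq hh
  have hylt : ybar u1 < ybar u2 := by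
    apply (hmono.lt_iff_lt ⟨hm1.1.le, hm1.2.le⟩ ⟨hm2.1.le, hm2.2.le⟩).mp
    rw [he1, he2]; exact h12
  have hflt : fker (q * ybar u2) < fker (q * ybar u1) := by
    apply fker_strictAntiOn hu₀ huniq
    · constructor
      · exact mul_nonneg hq.le hy1.le
      · have := hm2.2; rw [lt_div_iff₀ hq] at this; nlinarith
    · constructor
      · exact mul_nonneg hq.le hy2.le
      · have := hm2.2; rw [lt_div_iff₀ hq] at this; nlinarith
    · exact (mul_lt_mul_iff_right₀ hq).mpr hylt
  rw [div_lt_div_iff₀ hf1 hf2]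
  nlinarith

/-- with `h(y) = ∫₀^y f(qη) dη`, `ĉ₁,crit = (1/q) ∫₀^{u₀} f`,
`ȳ(ĉ₁)` the unique point of `(0, u₀/q)` with `h(ȳ) = ĉ₁`, and
`Ā(ĉ₁) = ∫₀^{ȳ(ĉ₁)} y h(y)/√(ĉ₁² - h(y)²) dy`, the map `ĉ₁ ↦ ĉ₁/Ā(ĉ₁)` is
strictly decreasing on `(0, ĉ₁,crit)`. -/
theorem c1_over_area_strictly_decreasing
    (u₀ q : ℝ) (hu₀ : 0 < u₀) (hfu₀ : fker u₀ = 0)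
    (huniq : ∀ u : ℝ, 0 < u → fker u = 0 → u = u₀)
    (hq : 0 < q)
    (h : ℝ → ℝ) (hh : ∀ y : ℝ, h y = ∫ η in (0:ℝ)..y, fker (q * η))
    (ccrit : ℝ) (hccrit : ccrit = (1 / q) * ∫ u in (0:ℝ)..u₀, fker u)
    (ybar : ℝ → ℝ)
    (hybar : ∀ c1 ∈ Set.Ioo (0:ℝ) ccrit,
      ybar c1 ∈ Set.Ioo 0 (u₀ / q) ∧ h (ybar c1) = c1)
    (Abar : ℝ → ℝ)
    (hAbar : ∀ c1 ∈ Set.Ioo (0:ℝ) ccrit,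
      Abar c1 = ∫ y in (0:ℝ)..(ybar c1), y * h y / Real.sqrt (c1 ^ 2 - (h y) ^ 2)) :
    ∀ c1i c1j : ℝ, 0 < c1i → c1i < c1j → c1j < ccrit →
      c1j / Abar c1j < c1i / Abar c1i := by
  intro ci cj hi hij hj
  have hci : ci ∈ Set.Ioo (0:ℝ) ccrit := ⟨hi, lt_trans hij hj⟩
  have hcj : cj ∈ Set.Ioo (0:ℝ) ccrit := ⟨lt_trans hi hij, hj⟩
  obtain ⟨hint_i, hA_i⟩ := key_repr hu₀ huniq hq hh hybar hAbar hci
  obtain ⟨hint_j, hA_j⟩ := key_repr hu₀ huniq hq hh hybar hAbar hcj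
  set gi : ℝ → ℝ := fun s => ybar (ci*s) / fker (q * ybar (ci*s)) * (s / Real.sqrt (1 - s^2))
    with hgi
  set gj : ℝ → ℝ := fun s => ybar (cj*s) / fker (q * ybar (cj*s)) * (s / Real.sqrt (1 - s^2))
    with hgj
  have hmemscale : ∀ (c : ℝ), c ∈ Set.Ioo (0:ℝ) ccrit → ∀ s ∈ Ioo (0:ℝ) 1,
      c * s ∈ Set.Ioo (0:ℝ) ccrit := by
    intro c hc s hs
    constructor
    · exact mul_pos hc.1 hs.1
    · nlinarith [hc.1, hc.2, hs.1, hs.2]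
  have hsfac : ∀ s ∈ Ioo (0:ℝ) 1, 0 < s / Real.sqrt (1 - s^2) := by
    intro s hs
    apply div_pos hs.1
    apply Real.sqrt_pos.mpr
    nlinarith [hs.1, hs.2]
  have hgi_pos : ∀ s ∈ Ioo (0:ℝ) 1, 0 < gi s := by
    intro s hs
    obtain ⟨hy, hf⟩ := G_facts hu₀ huniq hq hybar (hmemscale ci hci s hs)
    exact mul_pos (div_pos hy hf) (hsfac s hs)
  have hglt : ∀ s ∈ Ioo (0:ℝ) 1, gi s < gj s := by
    intro s hs
    apply mul_lt_mul_of_pos_right _ (hsfac s hs)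
    exact G_mono hu₀ huniq hq hh hybar (hmemscale ci hci s hs) (hmemscale cj hcj s hs)
      (by nlinarith [hs.1])
  -- positivity of the integrals
  have hvol : (0:ENNReal) < volume (Ioo (0:ℝ) 1) := by
    rw [Real.volume_Ioo]; norm_num
  have hIpos : 0 < ∫ s in Ioo (0:ℝ) 1, gi s := by
    rw [setIntegral_pos_iff_support_of_nonneg_ae _ hint_i]
    · apply lt_of_lt_of_le hvol
      apply measure_mono
      intro s hs
      exact ⟨(hgi_pos s hs).ne', hs⟩
    · rw [Filter.EventuallyLE, ae_restrict_iff' measurableSet_Ioo]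
      exact ae_of_all _ fun s hs => (hgi_pos s hs).le
  have hIlt : (∫ s in Ioo (0:ℝ) 1, gi s) < ∫ s in Ioo (0:ℝ) 1, gj s := by
    have hsubint : IntegrableOn (fun s => gj s - gi s) (Ioo (0:ℝ) 1) volume :=
      hint_j.sub hint_i
    have hd : 0 < ∫ s in Ioo (0:ℝ) 1, (gj s - gi s) := by
      rw [setIntegral_pos_iff_support_of_nonneg_ae _ hsubint]
      · apply lt_of_lt_of_le hvol
        apply measure_mono
        intro s hs
        exact ⟨sub_ne_zero.mpr (hglt s hs).ne', hs⟩
      · rw [Filter.EventuallyLE, ae_restrict_iff' measurableSet_Ioo]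
        exact ae_of_all _ fun s hs => sub_nonneg.mpr (hglt s hs).le
    rw [MeasureTheory.integral_sub hint_j hint_i] at hd
    linarith
  rw [hA_i, hA_j]
  rw [show cj / (cj * ∫ s in Ioo (0:ℝ) 1, gj s) = 1 / ∫ s in Ioo (0:ℝ) 1, gj s by
      rw [div_mul_eq_div_div, div_self hcj.1.ne'],
    show ci / (ci * ∫ s in Ioo (0:ℝ) 1, gi s) = 1 / ∫ s in Ioo (0:ℝ) 1, gi s by
      rw [div_mul_eq_div_div, div_self hci.1.ne']]
  exact one_div_lt_one_div_of_lt hIpos hIlt
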